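/- arXiv:1011.1452 — 2 statements merged into one kernel-verified Lean document; each statement's English description precedes it below -/
import Mathlib

section
/- Let $d\ge 2$ and let $q_0,\dots,q_{N-1}$ be real numbers. Then there exists a nearest-neighbor path $S$ in $\mathbb{Z}^d$ starting at $0$ such that $H_N(S) = (Q_+^{\mathrm{odd}})^2+(Q_-^{\mathrm{odd}})^2+(Q_+^{\mathrm{even}})^2+(Q_-^{\mathrm{even}})^2$, so that this value is the maximum of $H_N$ over all nearest-neighbor paths. -/
open MeasureTheory Filter Finset Real
open scoped ENNReal

noncomputable section

/-- Total charge at site `x` for charges `q` and path `S`, among monomers `0 ≤ i < N`. -/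
def Qof {d : ℕ} (N : ℕ) (q : ℕ → ℝ) (S : ℕ → Fin d → ℤ) (x : Fin d → ℤ) : ℝ :=
  ∑ i ∈ Finset.range N, if S i = x then q i else 0

/-- Energy `H_N = ∑_x (Q_N^x)²` (the sum over all of `ℤ^d` reduces to visited sites). -/
def Hof {d : ℕ} (N : ℕ) (q : ℕ → ℝ) (S : ℕ → Fin d → ℤ) : ℝ :=
  ∑ x ∈ (Finset.range N).image S, (Qof N q S x) ^ 2

/-- `v` is a unit step in `ℤ^d`. -/
def IsUnitStep {d : ℕ} (v : Fin d → ℤ) : Prop := (∑ j, |v j|) = 1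

/-- `S` is a nearest-neighbor path in `ℤ^d` starting at `0`. -/
def IsNNPath {d : ℕ} (S : ℕ → Fin d → ℤ) : Prop :=
  S 0 = 0 ∧ ∀ i, IsUnitStep (fun j => S (i + 1) j - S i j)

/-- Positive (`s = true`) or negative (`s = false`) part of a real charge. -/
def Qsgn (s : Bool) (r : ℝ) : ℝ := if s then max r 0 else max (-r) 0

/-- `Q_ε^p`: total charge of sign `s` at indices of parity `p`
(`p = true` means odd). -/
def Qpar (N : ℕ) (q : ℕ → ℝ) (p : Bool) (s : Bool) : ℝ :=
  ∑ i ∈ Finset.range N, if i % 2 = (if p then 1 else 0) then Qsgn s (q i) else 0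

lemma sum_sq_le_sq_sum' {α : Type*} (s : Finset α) (f : α → ℝ)
    (hf : ∀ x ∈ s, 0 ≤ f x) : ∑ x ∈ s, f x ^ 2 ≤ (∑ x ∈ s, f x) ^ 2 := by
  have h : ∀ x ∈ s, f x ^ 2 ≤ f x * ∑ y ∈ s, f y := by
    intro x hx
    have h1 := Finset.single_le_sum hf hx
    nlinarith [hf x hx]
  calc ∑ x ∈ s, f x ^ 2 ≤ ∑ x ∈ s, f x * ∑ y ∈ s, f y := Finset.sum_le_sum h
    _ = (∑ x ∈ s, f x) ^ 2 := by rw [← Finset.sum_mul]; ring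

lemma step_sum_parity {d : ℕ} {v : Fin d → ℤ} (h : IsUnitStep v) :
    (∑ j, v j) % 2 = 1 := by
  have h' : (∑ j, |v j|) = 1 := h
  have h1 : (∑ j, v j) % 2 = (∑ j, |v j|) % 2 := by
    rw [Finset.sum_int_mod, Finset.sum_int_mod (f := fun j => |v j|)]
    congr 1
    refine Finset.sum_congr rfl fun j _ => ?_
    rcases abs_choice (v j) with hj | hj <;> omega
  rw [h1, h']
  decide

lemma path_parity {d : ℕ} {S : ℕ → Fin d → ℤ} (hS : IsNNPath S) (i : ℕ) :
    (∑ j, S i j) % 2 = (i : ℤ) % 2 := by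
  induction i with
  | zero => simp [hS.1]
  | succ i ih =>
    have hv : (∑ j, (S (i + 1) j - S i j)) % 2 = 1 := step_sum_parity (hS.2 i)
    have hsum : (∑ j, S (i + 1) j) = (∑ j, S i j) + ∑ j, (S (i + 1) j - S i j) := by
      rw [← Finset.sum_add_distrib]
      refine Finset.sum_congr rfl fun j _ => by ring
    push_cast
    omega

def vtx (d : ℕ) (p m : Bool) : Fin d → ℤ := fun j =>
  if j.val = 0 then (if p = m then 1 else 0)
  else if j.val = 1 then (if m then 0 else 1) else 0

lemma vtx_inj {d : ℕ} (hd : 2 ≤ d) {p m p' m' : Bool}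
    (h : vtx d p m = vtx d p' m') : p = p' ∧ m = m' := by
  have h0 := congrFun h ⟨0, by omega⟩
  have h1 := congrFun h ⟨1, by omega⟩
  simp only [vtx] at h0 h1
  norm_num at h0 h1
  cases p <;> cases m <;> cases p' <;> cases m' <;> simp_all

lemma vtx_step {d : ℕ} (hd : 2 ≤ d) (p m m' : Bool) :
    IsUnitStep (fun j => vtx d (!p) m' j - vtx d p m j) := by
  show (∑ j, |vtx d (!p) m' j - vtx d p m j|) = 1
  have key : (∑ j : Fin d, |vtx d (!p) m' j - vtx d p m j|) =
      ∑ j ∈ ({⟨0, by omega⟩, ⟨1, by omega⟩} : Finset (Fin d)),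
        |vtx d (!p) m' j - vtx d p m j| := by
    symm
    apply Finset.sum_subset (Finset.subset_univ _)
    intro j _ hj
    simp only [Finset.mem_insert, Finset.mem_singleton, Fin.ext_iff] at hj
    push_neg at hj
    have hj0 : j.val ≠ 0 := hj.1
    have hj1 : j.val ≠ 1 := hj.2
    simp [vtx, hj0, hj1]
  rw [key, Finset.sum_pair (by simp [Fin.ext_iff])]
  cases p <;> cases m <;> cases m' <;> norm_num [vtx]

def pth (d : ℕ) (q : ℕ → ℝ) (b : Bool) : ℕ → Fin d → ℤ :=
  fun i => vtx d (decide (i % 2 = 1)) (decide (0 ≤ q i) == b)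

lemma pth_isNN {d : ℕ} (hd : 2 ≤ d) (q : ℕ → ℝ) :
    IsNNPath (pth d q (decide (0 ≤ q 0))) := by
  constructor
  · funext j
    show vtx d (decide (0 % 2 = 1)) (decide (0 ≤ q 0) == decide (0 ≤ q 0)) j = 0
    norm_num [vtx]
  · intro i
    have hiff : ((i + 1) % 2 = 1) ↔ ¬(i % 2 = 1) := by omega
    have hd1 : decide ((i + 1) % 2 = 1) = !decide (i % 2 = 1) := by
      rcases Nat.mod_two_eq_zero_or_one i with h | h
      · have h2 : (i + 1) % 2 = 1 := by omega
        simp [h, h2]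
      · have h2 : ¬((i + 1) % 2 = 1) := by omega
        simp [h, h2]
    show IsUnitStep (fun j => pth d q _ (i + 1) j - pth d q _ i j)
    unfold pth
    rw [hd1]
    exact vtx_step hd _ _ _

set_option maxHeartbeats 1000000 in
lemma pth_hof {d : ℕ} (hd : 2 ≤ d) (N : ℕ) (q : ℕ → ℝ) (b : Bool) :
    Hof N q (pth d q b) =
      (Qpar N q true true) ^ 2 + (Qpar N q true false) ^ 2 +
      (Qpar N q false true) ^ 2 + (Qpar N q false false) ^ 2 := by
  classical
  have hcond : ∀ (i : ℕ) (p m : Bool), (pth d q b i = vtx d p m) ↔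
      (decide (i % 2 = 1) = p ∧ (decide (0 ≤ q i) == b) = m) := by
    intro i p m
    constructor
    · intro h; exact vtx_inj hd h
    · rintro ⟨h1, h2⟩; unfold pth; rw [h1, h2]
  have hne : ∀ p m p' m' : Bool, (p, m) ≠ (p', m') → vtx d p m ≠ vtx d p' m' := by
    intro p m p' m' hne12 h
    obtain ⟨h1, h2⟩ := vtx_inj hd h
    exact hne12 (by rw [h1, h2])
  set V : Finset (Fin d → ℤ) :=
    {vtx d true true, vtx d true false, vtx d false true, vtx d false false} with hV
  have himg : (Finset.range N).image (pth d q b) ⊆ V := by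
    intro x hx
    obtain ⟨i, hi, rfl⟩ := Finset.mem_image.mp hx
    have hpi : pth d q b i = vtx d (decide (i % 2 = 1)) (decide (0 ≤ q i) == b) := rfl
    rw [hpi]
    cases decide (i % 2 = 1) <;> cases (decide (0 ≤ q i) == b) <;> simp [hV]
  have hzero : ∀ x ∈ V, x ∉ (Finset.range N).image (pth d q b) →
      Qof N q (pth d q b) x ^ 2 = 0 := by
    intro x _ hx
    have h0 : Qof N q (pth d q b) x = 0 := by
      apply Finset.sum_eq_zero
      intro i hi
      rw [if_neg]
      intro h
      exact hx (Finset.mem_image.mpr ⟨i, hi, h⟩)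
    rw [h0]; norm_num
  have hHV : Hof N q (pth d q b) = ∑ x ∈ V, Qof N q (pth d q b) x ^ 2 :=
    Finset.sum_subset himg hzero
  have n1 : vtx d true true ∉
      ({vtx d true false, vtx d false true, vtx d false false} : Finset (Fin d → ℤ)) := by
    simp only [Finset.mem_insert, Finset.mem_singleton]
    push_neg
    exact ⟨hne _ _ _ _ (by decide), hne _ _ _ _ (by decide), hne _ _ _ _ (by decide)⟩
  have n2 : vtx d true false ∉
      ({vtx d false true, vtx d false false} : Finset (Fin d → ℤ)) := by
    simp only [Finset.mem_insert, Finset.mem_singleton]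
    push_neg
    exact ⟨hne _ _ _ _ (by decide), hne _ _ _ _ (by decide)⟩
  have n3 : vtx d false true ∉ ({vtx d false false} : Finset (Fin d → ℤ)) := by
    simp only [Finset.mem_singleton]
    exact hne _ _ _ _ (by decide)
  have hterm : ∀ p m : Bool, Qof N q (pth d q b) (vtx d p m) =
      (if m = (true == b) then Qpar N q p true else -Qpar N q p false) := by
    intro p m
    by_cases hm : m = (true == b)
    · rw [if_pos hm]
      unfold Qof Qpar
      apply Finset.sum_congr rfl
      intro i _
      by_cases hA : i % 2 = (if p then 1 else 0)
      · by_cases hq : 0 ≤ q i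
        · rw [if_pos, if_pos hA]
          · simp only [Qsgn, if_true]
            rw [max_eq_left hq]
          · rw [hcond]
            refine ⟨?_, ?_⟩
            · cases p <;> simp_all <;> omega
            · rw [hm]; simp [hq]
        · rw [if_neg, if_pos hA]
          · simp only [Qsgn, if_true]
            rw [max_eq_right (le_of_not_ge hq)]
          · rw [hcond]
            rintro ⟨-, h2⟩
            rw [hm] at h2
            simp [hq] at h2
      · rw [if_neg, if_neg hA]
        rw [hcond]
        rintro ⟨h1, -⟩
        cases p <;> simp_all <;> omega
    · rw [if_neg hm]
      unfold Qof Qpar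
      rw [← Finset.sum_neg_distrib]
      apply Finset.sum_congr rfl
      intro i _
      by_cases hA : i % 2 = (if p then 1 else 0)
      · by_cases hq : 0 ≤ q i
        · rw [if_neg, if_pos hA]
          · simp only [Qsgn, Bool.false_eq_true, if_false]
            rw [max_eq_right (by linarith)]
            ring
          · rw [hcond]
            rintro ⟨-, h2⟩
            apply hm
            rw [← h2]
            simp [hq]
        · rw [if_pos, if_pos hA]
          · simp only [Qsgn, Bool.false_eq_true, if_false]
            rw [max_eq_left (by linarith [le_of_not_ge hq])]
            ring
          · rw [hcond]
            refine ⟨?_, ?_⟩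
            · cases p <;> simp_all <;> omega
            · simp only [hq, decide_false]
              cases b <;> cases m <;> simp_all
      · rw [if_neg, if_neg hA]
        · ring
        · rw [hcond]
          rintro ⟨h1, -⟩
          cases p <;> simp_all <;> omega
  rw [hHV, hV, Finset.sum_insert n1, Finset.sum_insert n2, Finset.sum_insert n3,
    Finset.sum_singleton, hterm, hterm, hterm, hterm]
  cases b <;> simp <;> ring

lemma hof_le {d : ℕ} (N : ℕ) (q : ℕ → ℝ) (S : ℕ → Fin d → ℤ) (hS : IsNNPath S) :
    Hof N q S ≤ (Qpar N q true true) ^ 2 + (Qpar N q true false) ^ 2 +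
      (Qpar N q false true) ^ 2 + (Qpar N q false false) ^ 2 := by
  classical
  set I := (Finset.range N).image S with hI
  set Qp : Bool → (Fin d → ℤ) → ℝ :=
    fun s x => ∑ i ∈ Finset.range N, if S i = x then Qsgn s (q i) else 0 with hQp
  have hQpnn : ∀ s x, 0 ≤ Qp s x := by
    intro s x
    apply Finset.sum_nonneg
    intro i _
    split
    · cases s <;> simp [Qsgn] <;> exact le_max_right _ _
    · exact le_refl 0
  have hQof : ∀ x, Qof N q S x = Qp true x - Qp false x := by
    intro x
    rw [hQp]
    unfold Qof
    rw [← Finset.sum_sub_distrib]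
    apply Finset.sum_congr rfl
    intro i _
    split
    · simp only [Qsgn, if_true, Bool.false_eq_true, if_false]
      rcases le_total 0 (q i) with h | h
      · rw [max_eq_left h, max_eq_right (by linarith)]; ring
      · rw [max_eq_right h, max_eq_left (by linarith)]; ring
    · ring
  have hfil : ∀ p s : Bool,
      ∑ x ∈ I.filter (fun x => (∑ j, x j) % 2 = (if p then 1 else 0)), Qp s x
        = Qpar N q p s := by
    intro p s
    rw [hQp]
    unfold Qpar
    rw [Finset.sum_comm]
    apply Finset.sum_congr rfl
    intro i hi
    rw [Finset.sum_ite_eq]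
    have hpar := path_parity hS i
    by_cases hip : i % 2 = (if p then 1 else 0)
    · rw [if_pos hip, if_pos]
      rw [Finset.mem_filter]
      refine ⟨Finset.mem_image_of_mem S hi, ?_⟩
      cases p <;> simp_all <;> omega
    · rw [if_neg hip, if_neg]
      rw [Finset.mem_filter]
      rintro ⟨-, h2⟩
      apply hip
      cases p <;> simp_all <;> omega
  have hsplit : Hof N q S =
      (∑ x ∈ I.filter (fun x => (∑ j, x j) % 2 = (1 : ℤ)), Qof N q S x ^ 2) +
      (∑ x ∈ I.filter (fun x => (∑ j, x j) % 2 = (0 : ℤ)), Qof N q S x ^ 2) := by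
    unfold Hof
    rw [← Finset.sum_filter_add_sum_filter_not I (fun x => (∑ j, x j) % 2 = (1 : ℤ))]
    congr 1
    apply Finset.sum_congr _ (fun _ _ => rfl)
    apply Finset.filter_congr
    intro x _
    constructor <;> intro h <;> omega
  have key : ∀ F : Finset (Fin d → ℤ),
      (∑ x ∈ F, Qof N q S x ^ 2) ≤ (∑ x ∈ F, Qp true x) ^ 2 + (∑ x ∈ F, Qp false x) ^ 2 := by
    intro F
    have h1 : ∑ x ∈ F, Qof N q S x ^ 2 ≤ ∑ x ∈ F, (Qp true x ^ 2 + Qp false x ^ 2) := by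
      apply Finset.sum_le_sum
      intro x _
      rw [hQof x]
      nlinarith [hQpnn true x, hQpnn false x]
    rw [Finset.sum_add_distrib] at h1
    have h2 := sum_sq_le_sq_sum' F (Qp true) (fun x _ => hQpnn true x)
    have h3 := sum_sq_le_sq_sum' F (Qp false) (fun x _ => hQpnn false x)
    linarith
  have k1 := key (I.filter (fun x => (∑ j, x j) % 2 = (1 : ℤ)))
  have k2 := key (I.filter (fun x => (∑ j, x j) % 2 = (0 : ℤ)))
  have e1 : ∑ x ∈ I.filter (fun x => (∑ j, x j) % 2 = (1 : ℤ)), Qp true x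
      = Qpar N q true true := by simpa using hfil true true
  have e2 : ∑ x ∈ I.filter (fun x => (∑ j, x j) % 2 = (1 : ℤ)), Qp false x
      = Qpar N q true false := by simpa using hfil true false
  have e3 : ∑ x ∈ I.filter (fun x => (∑ j, x j) % 2 = (0 : ℤ)), Qp true x
      = Qpar N q false true := by simpa using hfil false true
  have e4 : ∑ x ∈ I.filter (fun x => (∑ j, x j) % 2 = (0 : ℤ)), Qp false x
      = Qpar N q false false := by simpa using hfil false false
  rw [hsplit]
  rw [e1] at k1; rw [e2] at k1; rw [e3] at k2; rw [e4] at k2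
  linarith

/-- if `d ≥ 2`, there is a nearest-neighbor path from `0`
achieving `H_N = (Q₊^odd)² + (Q₋^odd)² + (Q₊^even)² + (Q₋^even)²`, so that this
value is the maximum of `H_N` over all nearest-neighbor paths. -/
theorem exists_path_four_squares {d : ℕ} (hd : 2 ≤ d) (N : ℕ) (q : ℕ → ℝ) :
    (∃ S : ℕ → Fin d → ℤ, IsNNPath S ∧
      Hof N q S = (Qpar N q true true) ^ 2 + (Qpar N q true false) ^ 2 +
        (Qpar N q false true) ^ 2 + (Qpar N q false false) ^ 2) ∧
    ∀ S : ℕ → Fin d → ℤ, IsNNPath S →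
      Hof N q S ≤ (Qpar N q true true) ^ 2 + (Qpar N q true false) ^ 2 +
        (Qpar N q false true) ^ 2 + (Qpar N q false false) ^ 2 := by
  exact ⟨⟨pth d q (decide (0 ≤ q 0)), pth_isNN hd q, pth_hof hd N q _⟩,
    fun S hS => hof_le N q S hS⟩
end
end

section
/- Let the charges $\{q_i\}$ be i.i.d. with $\mathbb{E}q_0^+$ and $\mathbb{E}q_0^-$ possibly infinite. If $d\ge 2$, then almost surely $\lim_{N\to\infty} \frac{1}{N^2}\max_S H_N(S) = \frac{(\mathbb{E}q_0^+)^2+(\mathbb{E}q_0^-)^2}{2}$, where the maximum is over all nearest-neighbor paths $S$ of length $N$ in $\mathbb{Z}^d$ starting at $0$, and the limit is interpreted in $[0,\infty]$. -/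
open MeasureTheory Filter Finset Real
open scoped ENNReal

noncomputable section

/-- Maximum of the energy `H_N` over all nearest-neighbor paths from `0`. -/
def maxH (d N : ℕ) (q : ℕ → ℝ) : ℝ :=
  sSup {h : ℝ | ∃ S : ℕ → Fin d → ℤ, IsNNPath S ∧ h = Hof N q S}

open ProbabilityTheory

lemma Qsgn_nonneg (s : Bool) (r : ℝ) : 0 ≤ Qsgn s r := by
  cases s <;> simp [Qsgn]

lemma Qpar_nonneg (N : ℕ) (q : ℕ → ℝ) (p s : Bool) : 0 ≤ Qpar N q p s := by
  refine Finset.sum_nonneg fun i _ => ?_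
  split_ifs <;> simp [Qsgn_nonneg]

def Fq (N : ℕ) (q : ℕ → ℝ) : ℝ :=
  Qpar N q true true ^ 2 + Qpar N q true false ^ 2 +
    Qpar N q false true ^ 2 + Qpar N q false false ^ 2

/-- Parity of positions along a nearest-neighbor path. -/
lemma nnpath_parity {d : ℕ} {S : ℕ → Fin d → ℤ} (hS : IsNNPath S) (i : ℕ) :
    Even ((∑ j, S i j) + i) := by
  induction i with
  | zero => simp [hS.1]
  | succ i ih =>
      have hstep := hS.2 i
      have hodd : Odd (∑ j, (S (i + 1) j - S i j)) := by
        have h1 : (∑ j, (S (i+1) j - S i j)) % 2 = (∑ j, |S (i+1) j - S i j|) % 2 := by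
          rw [Finset.sum_int_mod, Finset.sum_int_mod (f := fun j => |S (i+1) j - S i j|)]
          congr 1
          refine Finset.sum_congr rfl fun j _ => ?_
          rcases abs_choice (S (i+1) j - S i j) with h | h <;> omega
        have h2 : (∑ j, |S (i+1) j - S i j|) = 1 := hstep
        rw [Int.odd_iff, h1, h2]; decide
      have hsum : (∑ j, S (i+1) j) = (∑ j, (S (i+1) j - S i j)) + ∑ j, S i j := by
        rw [← Finset.sum_add_distrib]; simp
      have : ((∑ j, S (i+1) j) + (i+1) : ℤ) =
          ((∑ j, (S (i+1) j - S i j)) + 1) + ((∑ j, S i j) + i) := by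
        push_cast [hsum]; ring
      have key : Even ((∑ j, S (i+1) j) + ((i:ℤ)+1)) := by
        rw [this]; exact (hodd.add_one).add ih
      push_cast
      exact key

lemma nnpath_parity_eq {d : ℕ} {S : ℕ → Fin d → ℤ} (hS : IsNNPath S) {i j : ℕ}
    (h : S i = S j) : i % 2 = j % 2 := by
  have hi := nnpath_parity hS i
  have hj := nnpath_parity hS j
  rw [h] at hi
  have : Even ((i : ℤ) - j) := by
    have := hi.sub hj
    simpa using this
  have h2 : ((i:ℤ) - j) % 2 = 0 := Int.even_iff.mp this
  omega

/-- Upper bound: four-point lemma. -/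
lemma hof_le_Fq {d : ℕ} (N : ℕ) (q : ℕ → ℝ) {S : ℕ → Fin d → ℤ} (hS : IsNNPath S) :
    Hof N q S ≤ Fq N q := by
  classical
  set T := (Finset.range N).image S with hT
  set g : Bool → Bool → (Fin d → ℤ) → ℝ := fun p s x =>
    ∑ i ∈ Finset.range N,
      if S i = x ∧ i % 2 = (if p then 1 else 0) then Qsgn s (q i) else 0 with hg
  have g_nonneg : ∀ p s x, 0 ≤ g p s x := by
    intro p s x
    refine Finset.sum_nonneg fun i _ => ?_
    split_ifs <;> simp [Qsgn_nonneg]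
  -- sum of g over T equals Qpar
  have hsum : ∀ p s, (∑ x ∈ T, g p s x) = Qpar N q p s := by
    intro p s
    rw [hg]
    simp only
    rw [Finset.sum_comm]
    refine Finset.sum_congr rfl fun i hi => ?_
    have hmem : S i ∈ T := Finset.mem_image_of_mem S hi
    have : ∀ x ∈ T, (if S i = x ∧ i % 2 = (if p then 1 else 0) then Qsgn s (q i) else 0)
        = if x = S i then (if i % 2 = (if p then 1 else 0) then Qsgn s (q i) else 0) else 0 := by
      intro x _
      by_cases hx : x = S i <;> by_cases hp : i % 2 = (if p then 1 else 0) <;>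
        simp [hx, hp, eq_comm]
    rw [Finset.sum_congr rfl this, Finset.sum_ite_eq' T (S i)]
    simp [hmem]
  -- pointwise bound
  have hpt : ∀ x ∈ T, (Qof N q S x) ^ 2 ≤
      g true true x ^ 2 + g true false x ^ 2 + g false true x ^ 2 + g false false x ^ 2 := by
    intro x hx
    obtain ⟨i₀, hi₀, hSi₀⟩ := Finset.mem_image.mp hx
    have hparity : ∀ i, S i = x → i % 2 = i₀ % 2 := by
      intro i hi
      exact nnpath_parity_eq hS (hi.trans hSi₀.symm)
    have main : ∀ p : Bool, (if p then 1 else 0) = i₀ % 2 → (Qof N q S x) ^ 2 ≤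
        g true true x ^ 2 + g true false x ^ 2 + g false true x ^ 2 + g false false x ^ 2 := by
      intro p hpv
      have hvan : ∀ s, g (!p) s x = 0 := by
        intro s
        refine Finset.sum_eq_zero fun i _ => ?_
        refine if_neg ?_
        rintro ⟨h1, h2⟩
        have h3 := hparity i h1
        cases p <;> simp at hpv h2 <;> omega
      have hdecomp : Qof N q S x = g p true x - g p false x := by
        rw [Qof, hg]
        simp only
        rw [← Finset.sum_sub_distrib]
        refine Finset.sum_congr rfl fun i hi => ?_
        by_cases h1 : S i = x
        · have h2 : i % 2 = (if p then 1 else 0) := by rw [hpv]; exact hparity i h1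
          simp only [h1, h2, if_true, true_and, and_self, if_pos]
          cases (em (0 ≤ q i)) with
          | inl h => simp [Qsgn, max_eq_left h, max_eq_right (neg_nonpos.mpr h)]
          | inr h =>
              push_neg at h
              simp [Qsgn, max_eq_right h.le, max_eq_left (neg_nonneg.mpr h.le)]
        · simp [h1]
      have hb : (Qof N q S x) ^ 2 ≤ g p true x ^ 2 + g p false x ^ 2 := by
        rw [hdecomp]
        nlinarith [mul_nonneg (g_nonneg p true x) (g_nonneg p false x)]
      cases p with
      | true =>
          have h1 := hvan true; have h2 := hvan false
          simp only [Bool.not_true] at h1 h2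
          rw [h1, h2]; simpa using hb
      | false =>
          have h1 := hvan true; have h2 := hvan false
          simp only [Bool.not_false] at h1 h2
          rw [h1, h2]; nlinarith [hb]
    rcases Nat.mod_two_eq_zero_or_one i₀ with h | h
    · exact main false (by simp [h])
    · exact main true (by simp [h])
  calc Hof N q S ≤ ∑ x ∈ T, (g true true x ^ 2 + g true false x ^ 2
        + g false true x ^ 2 + g false false x ^ 2) := Finset.sum_le_sum hpt
    _ = (∑ x ∈ T, g true true x ^ 2) + (∑ x ∈ T, g true false x ^ 2)
        + (∑ x ∈ T, g false true x ^ 2) + (∑ x ∈ T, g false false x ^ 2) := by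
          rw [← Finset.sum_add_distrib, ← Finset.sum_add_distrib, ← Finset.sum_add_distrib]
    _ ≤ (∑ x ∈ T, g true true x) ^ 2 + (∑ x ∈ T, g true false x) ^ 2
        + (∑ x ∈ T, g false true x) ^ 2 + (∑ x ∈ T, g false false x) ^ 2 := by
          gcongr <;> exact Finset.sum_sq_le_sq_sum_of_nonneg (fun i _ => g_nonneg _ _ _)
    _ = Fq N q := by rw [hsum, hsum, hsum, hsum]; rfl

/-! Lower bound: the four-site path. -/

def bvec (d k : ℕ) : Fin d → ℤ := fun j => if (j : ℕ) = k then 1 else 0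

def pathOf (d : ℕ) (q : ℕ → ℝ) (i : ℕ) : Fin d → ℤ :=
  if i % 2 = 1 then (if 0 ≤ q i then bvec d 0 else bvec d 1)
  else (if ((0 ≤ q i) ↔ (0 ≤ q 0)) then 0 else bvec d 0 + bvec d 1)

lemma sum_abs_bvec {d k : ℕ} (hk : k < d) : (∑ j, |bvec d k j|) = 1 := by
  rw [show (fun j : Fin d => |bvec d k j|) = fun j => if j = ⟨k, hk⟩ then 1 else 0 from ?_]
  · simp
  · funext j
    by_cases h : j = ⟨k, hk⟩
    · subst h; simp [bvec]
    · have : (j : ℕ) ≠ k := fun hc => h (Fin.ext hc)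
      simp [bvec, this, h]

lemma bvec_apply_ne {d k : ℕ} {j : Fin d} (h : (j : ℕ) ≠ k) : bvec d k j = 0 := by
  simp [bvec, h]

lemma isNNPath_pathOf {d : ℕ} (hd : 2 ≤ d) (q : ℕ → ℝ) : IsNNPath (pathOf d q) := by
  have h0 : (0 : ℕ) < d := by omega
  have h1 : (1 : ℕ) < d := by omega
  constructor
  · simp [pathOf]
  · intro i
    have unit_b : ∀ k, k < d → IsUnitStep (bvec d k) := fun k hk => sum_abs_bvec hk
    have unit_nb : ∀ k, k < d → IsUnitStep (fun j => -(bvec d k j)) := by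
      intro k hk
      show (∑ j, |-(bvec d k j)|) = 1
      rw [Finset.sum_congr rfl fun j _ => abs_neg _]
      exact sum_abs_bvec hk
    have step_eq : ∀ (v w : Fin d → ℤ), (∀ j, v j = w j) → IsUnitStep w → IsUnitStep v :=
      fun v w h hw => by rw [show v = w from funext h]; exact hw
    have key : ∀ x y : Fin d → ℤ, (x = 0 ∨ x = bvec d 0 + bvec d 1) →
        (y = bvec d 0 ∨ y = bvec d 1) →
        IsUnitStep (fun j => y j - x j) ∧ IsUnitStep (fun j => x j - y j) := by
      rintro x y (rfl | rfl) (rfl | rfl) <;> constructor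
      exacts [step_eq _ (bvec d 0)
                (fun j => by simp only [Pi.add_apply, Pi.zero_apply]; ring) (unit_b 0 h0),
        step_eq _ (fun j => -(bvec d 0 j))
                (fun j => by simp only [Pi.add_apply, Pi.zero_apply]; ring) (unit_nb 0 h0),
        step_eq _ (bvec d 1)
                (fun j => by simp only [Pi.add_apply, Pi.zero_apply]; ring) (unit_b 1 h1),
        step_eq _ (fun j => -(bvec d 1 j))
                (fun j => by simp only [Pi.add_apply, Pi.zero_apply]; ring) (unit_nb 1 h1),
        step_eq _ (fun j => -(bvec d 1 j))
                (fun j => by simp only [Pi.add_apply, Pi.zero_apply]; ring) (unit_nb 1 h1),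
        step_eq _ (bvec d 1)
                (fun j => by simp only [Pi.add_apply, Pi.zero_apply]; ring) (unit_b 1 h1),
        step_eq _ (fun j => -(bvec d 0 j))
                (fun j => by simp only [Pi.add_apply, Pi.zero_apply]; ring) (unit_nb 0 h0),
        step_eq _ (bvec d 0)
                (fun j => by simp only [Pi.add_apply, Pi.zero_apply]; ring) (unit_b 0 h0)]
    rcases Nat.mod_two_eq_zero_or_one i with hi | hi
    · -- i even, i+1 odd
      have hi1 : (i+1) % 2 = 1 := by omega
      have hx : pathOf d q i = 0 ∨ pathOf d q i = bvec d 0 + bvec d 1 := by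
        rw [pathOf, if_neg (by omega)]; split_ifs <;> simp
      have hy : pathOf d q (i+1) = bvec d 0 ∨ pathOf d q (i+1) = bvec d 1 := by
        rw [pathOf, if_pos hi1]; split_ifs <;> simp
      exact (key _ _ hx hy).1
    · have hi1 : (i+1) % 2 ≠ 1 := by omega
      have hy : pathOf d q i = bvec d 0 ∨ pathOf d q i = bvec d 1 := by
        rw [pathOf, if_pos hi]; split_ifs <;> simp
      have hx : pathOf d q (i+1) = 0 ∨ pathOf d q (i+1) = bvec d 0 + bvec d 1 := by
        rw [pathOf, if_neg hi1]; split_ifs <;> simp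
      exact (key _ _ hx hy).2

lemma hof_pathOf {d : ℕ} (hd : 2 ≤ d) (N : ℕ) (q : ℕ → ℝ) :
    Hof N q (pathOf d q) = Fq N q := by
  have h0 : (0 : ℕ) < d := by omega
  have h1 : (1 : ℕ) < d := by omega
  set S := pathOf d q with hSdef
  set b0 := bvec d 0 with hb0
  set b1 := bvec d 1 with hb1
  set u : Fin d → ℤ := b0 + b1 with hu
  have j0 : Fin d := ⟨0, h0⟩
  have ev : ∀ v : Fin d → ℤ, True := fun _ => trivial
  have e00 : b0 ⟨0, h0⟩ = 1 := by simp [hb0, bvec]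
  have e01 : b0 ⟨1, h1⟩ = 0 := by simp [hb0, bvec]
  have e10 : b1 ⟨0, h0⟩ = 0 := by simp [hb1, bvec]
  have e11 : b1 ⟨1, h1⟩ = 1 := by simp [hb1, bvec]
  have hzb0 : (0 : Fin d → ℤ) ≠ b0 := fun h => by
    have := congrFun h ⟨0, h0⟩; rw [e00] at this; simp at this
  have hzb1 : (0 : Fin d → ℤ) ≠ b1 := fun h => by
    have := congrFun h ⟨1, h1⟩; rw [e11] at this; simp at this
  have hzu : (0 : Fin d → ℤ) ≠ u := fun h => by
    have := congrFun h ⟨0, h0⟩; rw [hu] at this; simp [Pi.add_apply, e00, e10] at this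
  have hb0b1 : b0 ≠ b1 := fun h => by
    have := congrFun h ⟨0, h0⟩; rw [e00, e10] at this; simp at this
  have hb0u : b0 ≠ u := fun h => by
    have := congrFun h ⟨1, h1⟩; rw [hu] at this; simp [Pi.add_apply, e01, e11] at this
  have hb1u : b1 ≠ u := fun h => by
    have := congrFun h ⟨0, h0⟩; rw [hu] at this; simp [Pi.add_apply, e00, e10] at this
  have hSodd : ∀ i, i % 2 = 1 → S i = if 0 ≤ q i then b0 else b1 := by
    intro i hi; rw [hSdef, pathOf, if_pos hi]
  have hSeven : ∀ i, i % 2 = 0 → S i = if (0 ≤ q i) ↔ (0 ≤ q 0) then 0 else u := by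
    intro i hi; rw [hSdef, pathOf, if_neg (by omega)]
  -- Qof values
  have htt : (if (true : Bool) = true then 1 else 0) = (1 : ℕ) := rfl
  have hff : (if (false : Bool) = true then 1 else 0) = (0 : ℕ) := rfl
  have Qb0 : Qof N q S b0 = Qpar N q true true := by
    rw [Qof, Qpar]
    refine Finset.sum_congr rfl fun i _ => ?_
    rw [htt]
    rcases Nat.mod_two_eq_zero_or_one i with hi | hi
    · rw [hSeven i hi, if_neg (show ¬ i % 2 = 1 by omega)]
      by_cases h3 : (0 ≤ q i) ↔ (0 ≤ q 0)
      · rw [if_pos h3, if_neg hzb0]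
      · rw [if_neg h3, if_neg (fun h => hb0u h.symm)]
    · rw [hSodd i hi, if_pos hi]
      by_cases h3 : 0 ≤ q i
      · rw [if_pos h3, if_pos rfl, Qsgn]; simp [max_eq_left h3]
      · rw [if_neg h3, if_neg (fun h => hb0b1 h.symm), Qsgn]
        push_neg at h3
        simp [max_eq_right h3.le]
  have Qb1 : Qof N q S b1 = -(Qpar N q true false) := by
    rw [Qof, Qpar]
    rw [← Finset.sum_neg_distrib]
    refine Finset.sum_congr rfl fun i _ => ?_
    rw [htt]
    rcases Nat.mod_two_eq_zero_or_one i with hi | hi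
    · rw [hSeven i hi, if_neg (show ¬ i % 2 = 1 by omega)]
      by_cases h3 : (0 ≤ q i) ↔ (0 ≤ q 0)
      · rw [if_pos h3, if_neg hzb1]; simp
      · rw [if_neg h3, if_neg (fun h => hb1u h.symm)]; simp
    · rw [hSodd i hi, if_pos hi]
      by_cases h3 : 0 ≤ q i
      · rw [if_pos h3, if_neg hb0b1, Qsgn]
        simp [max_eq_right (neg_nonpos.mpr h3)]
      · rw [if_neg h3, if_pos rfl, Qsgn]
        push_neg at h3
        simp [max_eq_left (neg_nonneg.mpr h3.le)]
  have Qzu : Qof N q S 0 ^ 2 + Qof N q S u ^ 2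
      = Qpar N q false true ^ 2 + Qpar N q false false ^ 2 := by
    by_cases hq0 : 0 ≤ q 0
    · have Qz : Qof N q S 0 = Qpar N q false true := by
        rw [Qof, Qpar]
        refine Finset.sum_congr rfl fun i _ => ?_
        rw [hff]
        rcases Nat.mod_two_eq_zero_or_one i with hi | hi
        · rw [hSeven i hi, if_pos hi]
          by_cases h3 : 0 ≤ q i
          · rw [if_pos (iff_of_true h3 hq0), if_pos rfl, Qsgn]; simp [max_eq_left h3]
          · rw [if_neg (show ¬((0 ≤ q i) ↔ (0 ≤ q 0)) from fun h => h3 (h.mpr hq0)), if_neg (Ne.symm hzu), Qsgn]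
            push_neg at h3
            simp [max_eq_right h3.le]
        · rw [hSodd i hi, if_neg (show ¬ i % 2 = 0 by omega)]
          by_cases h3 : 0 ≤ q i
          · rw [if_pos h3, if_neg (fun h => hzb0 h.symm)]
          · rw [if_neg h3, if_neg (fun h => hzb1 h.symm)]
      have Qu : Qof N q S u = -(Qpar N q false false) := by
        rw [Qof, Qpar, ← Finset.sum_neg_distrib]
        refine Finset.sum_congr rfl fun i _ => ?_
        rw [hff]
        rcases Nat.mod_two_eq_zero_or_one i with hi | hi
        · rw [hSeven i hi, if_pos hi]
          by_cases h3 : 0 ≤ q i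
          · rw [if_pos (iff_of_true h3 hq0), if_neg hzu, Qsgn]
            simp [max_eq_right (neg_nonpos.mpr h3)]
          · rw [if_neg (show ¬((0 ≤ q i) ↔ (0 ≤ q 0)) from fun h => h3 (h.mpr hq0)), if_pos rfl, Qsgn]
            push_neg at h3
            simp [max_eq_left (neg_nonneg.mpr h3.le)]
        · rw [hSodd i hi, if_neg (show ¬ i % 2 = 0 by omega)]
          by_cases h3 : 0 ≤ q i
          · rw [if_pos h3, if_neg (fun h => hb0u h)]; simp
          · rw [if_neg h3, if_neg (fun h => hb1u h)]; simp
      rw [Qz, Qu]; ring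
    · have Qz : Qof N q S 0 = -(Qpar N q false false) := by
        rw [Qof, Qpar, ← Finset.sum_neg_distrib]
        refine Finset.sum_congr rfl fun i _ => ?_
        rw [hff]
        rcases Nat.mod_two_eq_zero_or_one i with hi | hi
        · rw [hSeven i hi, if_pos hi]
          by_cases h3 : 0 ≤ q i
          · rw [if_neg (show ¬((0 ≤ q i) ↔ (0 ≤ q 0)) from fun h => hq0 (h.mp h3)), if_neg (Ne.symm hzu), Qsgn]
            simp [max_eq_right (neg_nonpos.mpr h3)]
          · rw [if_pos (iff_of_false h3 hq0), if_pos rfl, Qsgn]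
            push_neg at h3
            simp [max_eq_left (neg_nonneg.mpr h3.le)]
        · rw [hSodd i hi, if_neg (show ¬ i % 2 = 0 by omega)]
          by_cases h3 : 0 ≤ q i
          · rw [if_pos h3, if_neg (fun h => hzb0 h.symm)]; simp
          · rw [if_neg h3, if_neg (fun h => hzb1 h.symm)]; simp
      have Qu : Qof N q S u = Qpar N q false true := by
        rw [Qof, Qpar]
        refine Finset.sum_congr rfl fun i _ => ?_
        rw [hff]
        rcases Nat.mod_two_eq_zero_or_one i with hi | hi
        · rw [hSeven i hi, if_pos hi]
          by_cases h3 : 0 ≤ q i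
          · rw [if_neg (show ¬((0 ≤ q i) ↔ (0 ≤ q 0)) from fun h => hq0 (h.mp h3)), if_pos rfl, Qsgn]; simp [max_eq_left h3]
          · rw [if_pos (iff_of_false h3 hq0), if_neg hzu, Qsgn]
            push_neg at h3
            simp [max_eq_right h3.le]
        · rw [hSodd i hi, if_neg (show ¬ i % 2 = 0 by omega)]
          by_cases h3 : 0 ≤ q i
          · rw [if_pos h3, if_neg (fun h => hb0u h)]
          · rw [if_neg h3, if_neg (fun h => hb1u h)]
      rw [Qz, Qu]; ring
  -- Hof as a sum over the four sites
  have himg : (Finset.range N).image S ⊆ ({0, b0, b1, u} : Finset (Fin d → ℤ)) := by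
    intro x hx
    obtain ⟨i, _, rfl⟩ := Finset.mem_image.mp hx
    simp only [Finset.mem_insert, Finset.mem_singleton]
    rcases Nat.mod_two_eq_zero_or_one i with hi | hi
    · rw [hSeven i hi]; split_ifs <;> tauto
    · rw [hSodd i hi]; split_ifs <;> tauto
  have hHof : Hof N q S = ∑ x ∈ ({0, b0, b1, u} : Finset (Fin d → ℤ)), Qof N q S x ^ 2 := by
    rw [Hof]
    refine Finset.sum_subset himg fun x _ hnx => ?_
    have : Qof N q S x = 0 := by
      refine Finset.sum_eq_zero fun i hi => ?_
      exact if_neg fun h => hnx (by rw [← h]; exact Finset.mem_image_of_mem S hi)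
    rw [this]; ring
  have hexp : ∑ x ∈ ({0, b0, b1, u} : Finset (Fin d → ℤ)), Qof N q S x ^ 2
      = Qof N q S 0 ^ 2 + Qof N q S b0 ^ 2 + Qof N q S b1 ^ 2 + Qof N q S u ^ 2 := by
    rw [Finset.sum_insert (by simp [hzb0, hzb1, hzu]),
        Finset.sum_insert (by simp [hb0b1, hb0u]),
        Finset.sum_insert (by simp [hb1u]), Finset.sum_singleton]
    ring
  rw [hHof, hexp, Fq, Qb0, Qb1]
  nlinarith [Qzu]

lemma maxH_eq_Fq {d : ℕ} (hd : 2 ≤ d) (N : ℕ) (q : ℕ → ℝ) :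
    maxH d N q = Fq N q := by
  have hmem : Fq N q ∈ {h : ℝ | ∃ S : ℕ → Fin d → ℤ, IsNNPath S ∧ h = Hof N q S} :=
    ⟨pathOf d q, isNNPath_pathOf hd q, (hof_pathOf hd N q).symm⟩
  have hub : ∀ h ∈ {h : ℝ | ∃ S : ℕ → Fin d → ℤ, IsNNPath S ∧ h = Hof N q S}, h ≤ Fq N q := by
    rintro h ⟨S, hS, rfl⟩
    exact hof_le_Fq N q hS
  exact le_antisymm (csSup_le ⟨_, hmem⟩ hub) (le_csSup ⟨_, hub⟩ hmem)

/-! ## Probabilistic part -/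

open ProbabilityTheory

/-- SLLN in `[0,∞]` for nonnegative, pairwise independent, identically
distributed random variables (possibly with infinite mean). -/
lemma slln_ennreal {Ω : Type*} [MeasurableSpace Ω] {P : Measure Ω} [IsProbabilityMeasure P]
    (Y : ℕ → Ω → ℝ) (hm : ∀ i, Measurable (Y i)) (hnn : ∀ i ω, 0 ≤ Y i ω)
    (hindep : Pairwise (fun i j => IndepFun (Y i) (Y j) P))
    (hident : ∀ i, IdentDistrib (Y i) (Y 0) P P) :
    ∀ᵐ ω ∂P, Tendsto (fun n : ℕ => ENNReal.ofReal ((∑ i ∈ Finset.range n, Y i ω) / n)) atTop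
      (nhds (∫⁻ ω', ENNReal.ofReal (Y 0 ω') ∂P)) := by
  by_cases hint : Integrable (Y 0) P
  · have h := strong_law_ae_real Y hint hindep hident
    filter_upwards [h] with ω hω
    have : (∫⁻ ω', ENNReal.ofReal (Y 0 ω') ∂P) = ENNReal.ofReal (∫ ω', Y 0 ω' ∂P) :=
      (ofReal_integral_eq_lintegral_ofReal hint
        (Filter.Eventually.of_forall (hnn 0))).symm
    rw [this]
    exact (ENNReal.continuous_ofReal.tendsto _).comp hω
  · -- infinite mean case
    have htop : (∫⁻ ω', ENNReal.ofReal (Y 0 ω') ∂P) = ⊤ := by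
      by_contra h
      exact hint ⟨(hm 0).aestronglyMeasurable,
        (hasFiniteIntegral_iff_ofReal (Filter.Eventually.of_forall (hnn 0))).mpr
          (lt_top_iff_ne_top.mpr h)⟩
    rw [htop]
    -- truncations
    set Z : ℕ → ℕ → Ω → ℝ := fun M i ω => min (Y i ω) M with hZ
    have hZm : ∀ M i, Measurable (Z M i) := fun M i => (hm i).min measurable_const
    have hZnn : ∀ M i ω, 0 ≤ Z M i ω := fun M i ω => le_min (hnn i ω) (Nat.cast_nonneg M)
    have hφm : ∀ M : ℕ, Measurable (fun x : ℝ => min x M) := fun M =>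
      measurable_id.min measurable_const
    have hZint : ∀ M, Integrable (Z M 0) P := by
      intro M
      refine (integrable_const (M : ℝ)).mono' (hZm M 0).aestronglyMeasurable ?_
      refine Filter.Eventually.of_forall fun ω => ?_
      rw [Real.norm_eq_abs, abs_of_nonneg (hZnn M 0 ω)]
      exact min_le_right _ _
    have hslln : ∀ M, ∀ᵐ ω ∂P, Tendsto
        (fun n : ℕ => (∑ i ∈ Finset.range n, Z M i ω) / n) atTop
        (nhds (∫ ω', Z M 0 ω' ∂P)) := by
      intro M
      refine strong_law_ae_real _ (hZint M) ?_ ?_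
      · intro i j hij
        exact (hindep hij).comp (hφm M) (hφm M)
      · intro i
        exact (hident i).comp (hφm M)
    -- the truncated means tend to infinity
    have hmean : Tendsto (fun M : ℕ => ∫⁻ ω', ENNReal.ofReal (Z M 0 ω') ∂P) atTop
        (nhds (∫⁻ ω', ENNReal.ofReal (Y 0 ω') ∂P)) := by
      refine lintegral_tendsto_of_tendsto_of_monotone
        (fun M => ((hZm M 0).ennreal_ofReal).aemeasurable) ?_ ?_
      · refine Filter.Eventually.of_forall fun ω => ?_
        intro M M' hMM'
        exact ENNReal.ofReal_le_ofReal (min_le_min le_rfl (by exact_mod_cast hMM'))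
      · refine Filter.Eventually.of_forall fun ω => ?_
        have : ∀ᶠ M : ℕ in atTop, Z M 0 ω = Y 0 ω := by
          filter_upwards [eventually_ge_atTop ⌈Y 0 ω⌉₊] with M hM
          exact min_eq_left (le_trans (Nat.le_ceil _) (by exact_mod_cast hM))
        exact Tendsto.congr' (by filter_upwards [this] with M hM; rw [hM])
          tendsto_const_nhds
    have hunb : ∀ C : ℝ, ∃ M : ℕ, C < ∫ ω', Z M 0 ω' ∂P := by
      intro C
      rw [htop] at hmean
      have := (ENNReal.tendsto_nhds_top_iff_nnreal.mp hmean) (Real.toNNReal C + 1)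
      obtain ⟨M, hM⟩ := this.exists
      refine ⟨M, ?_⟩
      have heq : (∫⁻ ω', ENNReal.ofReal (Z M 0 ω') ∂P)
          = ENNReal.ofReal (∫ ω', Z M 0 ω' ∂P) :=
        (ofReal_integral_eq_lintegral_ofReal (hZint M)
          (Filter.Eventually.of_forall (hZnn M 0))).symm
      rw [heq] at hM
      have h1 : (ENNReal.ofReal C) < ENNReal.ofReal (∫ ω', Z M 0 ω' ∂P) := by
        refine lt_of_le_of_lt ?_ hM
        rw [ENNReal.ofReal]
        exact_mod_cast le_trans (le_add_of_nonneg_right zero_le_one) le_rfl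
      have h2 : 0 ≤ ∫ ω', Z M 0 ω' ∂P :=
        integral_nonneg (hZnn M 0)
      rcases lt_or_ge C 0 with hC | hC
      · exact lt_of_lt_of_le hC h2
      · exact (ENNReal.ofReal_lt_ofReal_iff_of_nonneg hC).mp h1
    -- combine
    have hae : ∀ᵐ ω ∂P, ∀ M : ℕ, Tendsto
        (fun n : ℕ => (∑ i ∈ Finset.range n, Z M i ω) / n) atTop
        (nhds (∫ ω', Z M 0 ω' ∂P)) := (ae_all_iff).mpr hslln
    filter_upwards [hae] with ω hω
    have hdiv : Tendsto (fun n : ℕ => (∑ i ∈ Finset.range n, Y i ω) / n) atTop atTop := by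
      refine tendsto_atTop.mpr fun b => ?_
      obtain ⟨M, hM⟩ := hunb (b + 1)
      filter_upwards [(hω M).eventually
          (eventually_gt_nhds (show b < ∫ ω', Z M 0 ω' ∂P by linarith)),
          eventually_ge_atTop 1] with n hn hn1
      have hsum : (∑ i ∈ Finset.range n, Z M i ω) ≤ ∑ i ∈ Finset.range n, Y i ω :=
        Finset.sum_le_sum fun i _ => min_le_left _ _
      have hnpos : (0:ℝ) < n := by exact_mod_cast hn1
      calc b ≤ (∑ i ∈ Finset.range n, Z M i ω) / n := hn.le
        _ ≤ (∑ i ∈ Finset.range n, Y i ω) / n := by gcongr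
    exact ENNReal.tendsto_ofReal_atTop.comp hdiv

lemma qpar_reindex (N : ℕ) (f : ℕ → ℝ) (p s : Bool) :
    Qpar N f p s = ∑ k ∈ Finset.range ((N + 1 - (if p then 1 else 0)) / 2),
      Qsgn s (f (2 * k + (if p then 1 else 0))) := by
  have key : ∀ pv : ℕ, pv ≤ 1 →
      (∑ i ∈ Finset.range N, if i % 2 = pv then Qsgn s (f i) else 0)
        = ∑ k ∈ Finset.range ((N + 1 - pv) / 2), Qsgn s (f (2 * k + pv)) := by
    intro pv hpv
    rw [← Finset.sum_filter]
    refine Finset.sum_nbij' (fun i => i / 2) (fun k => 2 * k + pv) ?_ ?_ ?_ ?_ ?_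
    · intro i hi
      simp only [Finset.mem_filter, Finset.mem_range] at hi
      simp only [Finset.mem_range]
      omega
    · intro k hk
      simp only [Finset.mem_range] at hk
      simp only [Finset.mem_filter, Finset.mem_range]
      omega
    · intro i hi
      simp only [Finset.mem_filter, Finset.mem_range] at hi
      show 2 * (i / 2) + pv = i
      omega
    · intro k hk
      show (2 * k + pv) / 2 = k
      omega
    · intro i hi
      simp only [Finset.mem_filter, Finset.mem_range] at hi
      obtain ⟨hi1, hi2⟩ := hi
      show Qsgn s (f i) = Qsgn s (f (2 * (i / 2) + pv))
      rw [show 2 * (i / 2) + pv = i by omega]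
  rw [Qpar]
  cases p
  · exact key 0 (by omega)
  · exact key 1 (by omega)

lemma qpar_slln {Ω : Type*} [MeasurableSpace Ω] (P : Measure Ω) [IsProbabilityMeasure P]
    (q : ℕ → Ω → ℝ) (hmeas : ∀ i, Measurable (q i))
    (hindep : iIndepFun q P)
    (hident : ∀ i, Measure.map (q i) P = Measure.map (q 0) P) (p s : Bool) :
    ∀ᵐ ω ∂P, Tendsto (fun N : ℕ => ENNReal.ofReal (Qpar N (fun i => q i ω) p s / N)) atTop
      (nhds ((∫⁻ ω', ENNReal.ofReal (Qsgn s (q 0 ω')) ∂P) / 2)) := by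
  have hpv1 : (if p then (1:ℕ) else 0) ≤ 1 := by cases p <;> simp
  set pv := (if p then (1:ℕ) else 0) with hpvdef
  set m : ℕ → ℕ := fun N => (N + 1 - pv) / 2 with hmdef
  have hφ : Measurable (Qsgn s) := by
    cases s
    · exact (measurable_id.neg.max measurable_const : Measurable fun r : ℝ => max (-r) 0)
    · exact (measurable_id.max measurable_const : Measurable fun r : ℝ => max r 0)
  have hφnn : ∀ r, 0 ≤ Qsgn s r := Qsgn_nonneg s
  set Y : ℕ → Ω → ℝ := fun k ω => Qsgn s (q (2 * k + pv) ω) with hYdef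
  have hidq : ∀ i j, IdentDistrib (q i) (q j) P P := fun i j =>
    ⟨(hmeas i).aemeasurable, (hmeas j).aemeasurable, (hident i).trans (hident j).symm⟩
  have hYm : ∀ k, Measurable (Y k) := fun k => hφ.comp (hmeas _)
  have hYnn : ∀ k ω, 0 ≤ Y k ω := fun k ω => hφnn _
  have hYindep : Pairwise (fun i j => IndepFun (Y i) (Y j) P) := by
    intro k l hkl
    exact (hindep.indepFun (show 2 * k + pv ≠ 2 * l + pv by omega)).comp hφ hφ
  have hYid : ∀ k, IdentDistrib (Y k) (Y 0) P P := fun k =>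
    (hidq (2 * k + pv) (2 * 0 + pv)).comp hφ
  have hL : (∫⁻ ω', ENNReal.ofReal (Y 0 ω') ∂P)
      = ∫⁻ ω', ENNReal.ofReal (Qsgn s (q 0 ω')) ∂P :=
    (((hidq (2 * 0 + pv) 0).comp hφ).comp ENNReal.measurable_ofReal).lintegral_eq
  have hslln := slln_ennreal Y hYm hYnn hYindep hYid
  rw [hL] at hslln
  set L := ∫⁻ ω', ENNReal.ofReal (Qsgn s (q 0 ω')) ∂P with hLdef
  -- m tends to infinity
  have hmt : Tendsto m atTop atTop :=
    tendsto_atTop.mpr fun b => eventually_atTop.mpr ⟨2 * b + 2, fun N hN => by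
      simp only [hmdef]; omega⟩
  -- (m N) / N tends to 1/2
  have hhalf : Tendsto (fun N : ℕ => ((m N : ℝ)) / N) atTop (nhds (1 / 2)) := by
    have hlow : Tendsto (fun N : ℕ => 1 / 2 - 1 / (N : ℝ)) atTop (nhds (1 / 2)) := by
      simpa using (tendsto_const_nhds : Tendsto (fun _ : ℕ => (1/2:ℝ)) atTop _).sub tendsto_one_div_atTop_nhds_zero_nat
    have hhigh : Tendsto (fun N : ℕ => 1 / 2 + 1 / (N : ℝ)) atTop (nhds (1 / 2)) := by
      simpa using (tendsto_const_nhds : Tendsto (fun _ : ℕ => (1/2:ℝ)) atTop _).add tendsto_one_div_atTop_nhds_zero_nat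
    refine tendsto_of_tendsto_of_tendsto_of_le_of_le' hlow hhigh ?_ ?_
    · filter_upwards [eventually_ge_atTop 2] with N hN
      have hc : N ≤ 2 * m N + 2 := by simp only [hmdef]; omega
      have hNpos : (0:ℝ) < N := by positivity
      have hcr : (N:ℝ) ≤ 2 * (m N) + 2 := by exact_mod_cast hc
      rw [le_div_iff₀ hNpos, sub_mul, div_mul_cancel₀ _ hNpos.ne']
      linarith
    · filter_upwards [eventually_ge_atTop 2] with N hN
      have hc : 2 * m N ≤ N + 2 := by simp only [hmdef]; omega
      have hNpos : (0:ℝ) < N := by positivity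
      have hcr : 2 * ((m N : ℝ)) ≤ N + 2 := by exact_mod_cast hc
      rw [div_le_iff₀ hNpos, add_mul, div_mul_cancel₀ _ hNpos.ne']
      linarith
  have hofhalf : Tendsto (fun N : ℕ => ENNReal.ofReal ((m N : ℝ) / N)) atTop
      (nhds (ENNReal.ofReal (1 / 2))) :=
    (ENNReal.continuous_ofReal.tendsto _).comp hhalf
  filter_upwards [hslln] with ω hω
  have h1 : Tendsto (fun N : ℕ =>
      ENNReal.ofReal ((∑ k ∈ Finset.range (m N), Y k ω) / (m N))) atTop (nhds L) :=
    hω.comp hmt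
  have h2 := ENNReal.Tendsto.mul h1 (Or.inr ENNReal.ofReal_ne_top) hofhalf
    (Or.inl (by rw [← ENNReal.ofReal_zero]; intro h; norm_num
                [ENNReal.ofReal_eq_ofReal_iff (by norm_num : (0:ℝ) ≤ 1/2) le_rfl] at h))
  have hval : L * ENNReal.ofReal (1 / 2) = L / 2 := by
    have : ENNReal.ofReal (1 / 2) = 2⁻¹ := by
      rw [ENNReal.ofReal_div_of_pos (by norm_num)]
      simp [ENNReal.ofReal_one, ENNReal.ofReal_ofNat]
    rw [this, ENNReal.div_eq_inv_mul, mul_comm]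
  rw [hval] at h2
  refine Tendsto.congr' ?_ h2
  filter_upwards [eventually_ge_atTop 2] with N hN
  have hm1 : 1 ≤ m N := by simp only [hmdef]; omega
  have hmpos : (0:ℝ) < m N := by exact_mod_cast hm1
  have hA : 0 ≤ (∑ k ∈ Finset.range (m N), Y k ω) :=
    Finset.sum_nonneg fun k _ => hYnn k ω
  rw [← ENNReal.ofReal_mul (div_nonneg hA hmpos.le)]
  congr 1
  rw [qpar_reindex, ← hpvdef]
  simp only [hmdef, hYdef]
  field_simp
  exact mul_div_cancel_right₀ _ hmpos.ne'

lemma ennreal_arith (a b : ℝ≥0∞) :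
    (a / 2) ^ 2 + ((b / 2) ^ 2 + ((a / 2) ^ 2 + (b / 2) ^ 2)) = (a ^ 2 + b ^ 2) / 2 := by
  have h2 : (2 : ℝ≥0∞) ≠ 0 := by norm_num
  have h2t : (2 : ℝ≥0∞) ≠ ⊤ := by norm_num
  have key : ∀ c : ℝ≥0∞, (c / 2) ^ 2 + (c / 2) ^ 2 = c ^ 2 / 2 := by
    intro c
    rw [div_eq_mul_inv, mul_pow, ← two_mul, ← mul_assoc, mul_comm 2 (c^2), mul_assoc]
    congr 1
    rw [pow_two, ← mul_assoc, ENNReal.mul_inv_cancel h2 h2t, one_mul]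
  calc (a / 2) ^ 2 + ((b / 2) ^ 2 + ((a / 2) ^ 2 + (b / 2) ^ 2))
      = ((a / 2) ^ 2 + (a / 2) ^ 2) + ((b / 2) ^ 2 + (b / 2) ^ 2) := by
        abel
    _ = a ^ 2 / 2 + b ^ 2 / 2 := by rw [key, key]
    _ = (a ^ 2 + b ^ 2) / 2 := (ENNReal.add_div).symm

/-- for i.i.d. charges (with `E q₀⁺, E q₀⁻ ∈ [0,∞]` possibly
infinite) and `d ≥ 2`, almost surely
`max_S H_N / N² → ((E q₀⁺)² + (E q₀⁻)²)/2` in `[0,∞]`. -/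
theorem maxH_asymptotics {d : ℕ} (hd : 2 ≤ d) {Ω : Type*} [MeasurableSpace Ω]
    (P : Measure Ω) [IsProbabilityMeasure P] (q : ℕ → Ω → ℝ)
    (hmeas : ∀ i, Measurable (q i))
    (hindep : iIndepFun q P)
    (hident : ∀ i, Measure.map (q i) P = Measure.map (q 0) P) :
    ∀ᵐ ω ∂P, Tendsto
      (fun N : ℕ => ENNReal.ofReal (maxH d N (fun i => q i ω) / (N : ℝ) ^ 2))
      atTop
      (nhds (((∫⁻ ω', ENNReal.ofReal (max (q 0 ω') 0) ∂P) ^ 2 +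
        (∫⁻ ω', ENNReal.ofReal (max (-q 0 ω') 0) ∂P) ^ 2) / 2)) := by

  filter_upwards [qpar_slln P q hmeas hindep hident true true,
    qpar_slln P q hmeas hindep hident true false,
    qpar_slln P q hmeas hindep hident false true,
    qpar_slln P q hmeas hindep hident false false] with ω htt htf hft hff
  simp only [Qsgn, if_true, if_false, Bool.false_eq_true, ite_true, ite_false] at htt htf hft hff
  set μp := ∫⁻ ω', ENNReal.ofReal (max (q 0 ω') 0) ∂P with hμp
  set μm := ∫⁻ ω', ENNReal.ofReal (max (-q 0 ω') 0) ∂P with hμm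
  have hGtt := ENNReal.Tendsto.pow (n := 2) htt
  have hGtf := ENNReal.Tendsto.pow (n := 2) htf
  have hGft := ENNReal.Tendsto.pow (n := 2) hft
  have hGff := ENNReal.Tendsto.pow (n := 2) hff
  have hG := hGtt.add (hGtf.add (hGft.add hGff))
  rw [ennreal_arith μp μm] at hG
  refine Tendsto.congr' ?_ hG
  filter_upwards [eventually_ge_atTop 1] with N hN
  have hN0 : ((N : ℝ)) ≠ 0 := by positivity
  have e1 : maxH d N (fun i => q i ω) / (N : ℝ) ^ 2
      = (Qpar N (fun i => q i ω) true true / N) ^ 2 +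
        ((Qpar N (fun i => q i ω) true false / N) ^ 2 +
        ((Qpar N (fun i => q i ω) false true / N) ^ 2 +
         (Qpar N (fun i => q i ω) false false / N) ^ 2)) := by
    rw [maxH_eq_Fq hd, Fq]
    field_simp
    ring
  have nn : ∀ p s : Bool, 0 ≤ Qpar N (fun i => q i ω) p s / N := fun p s =>
    div_nonneg (Qpar_nonneg _ _ _ _) (by positivity)
  rw [e1, ENNReal.ofReal_add (by positivity) (by positivity),
    ENNReal.ofReal_add (by positivity) (by positivity),
    ENNReal.ofReal_add (by positivity) (by positivity),
    ENNReal.ofReal_pow (nn true true), ENNReal.ofReal_pow (nn true false),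
    ENNReal.ofReal_pow (nn false true), ENNReal.ofReal_pow (nn false false)]
end
end
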